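/- arXiv:1903.07095 — 8 statements merged into one kernel-verified Lean document; each statement's English description precedes it below -/
import Mathlib

section
/- Let N ≥ 3 be an integer and let m(z) := ⌈-N·arg(z)/(2π)⌉ for nonzero complex z, where arg(z) ∈ [-π, π). If z is a nonzero complex number with m(z) + m(z⁻¹) ≡ 0 (mod N), then m(z·w) ≡ m(z) + m(w) (mod N) for every nonzero complex number w. -/
/-- The principal argument of a nonzero complex number, normalized to lie in `[-π, π)`. -/
noncomputable def parg (z : ℂ) : ℝ :=
  if Complex.arg z = Real.pi then -Real.pi else Complex.arg z

/-- `m(z) := ⌈-N·arg(z)/(2π)⌉` where `arg(z) ∈ [-π, π)`. -/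
noncomputable def mfun (N : ℤ) (z : ℂ) : ℤ :=
  ⌈(-(N : ℝ) * parg z) / (2 * Real.pi)⌉

lemma parg_sub_arg (u : ℂ) : ∃ e : ℤ, parg u = Complex.arg u + 2 * Real.pi * e := by
  unfold parg
  split_ifs with h
  · exact ⟨-1, by rw [h]; push_cast; ring⟩
  · exact ⟨0, by push_cast; ring⟩

lemma parg_mul {z w : ℂ} (hz : z ≠ 0) (hw : w ≠ 0) :
    ∃ k : ℤ, parg (z * w) = parg z + parg w + 2 * Real.pi * k := by
  obtain ⟨e1, h1⟩ := parg_sub_arg (z * w)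
  obtain ⟨e2, h2⟩ := parg_sub_arg z
  obtain ⟨e3, h3⟩ := parg_sub_arg w
  obtain ⟨k, hk⟩ := Real.Angle.angle_eq_iff_two_pi_dvd_sub.mp
    (Complex.arg_mul_coe_angle hz hw)
  simp only at hk
  refine ⟨k + e1 - e2 - e3, ?_⟩
  push_cast
  linear_combination h1 - h2 - h3 + hk

lemma parg_inv {z : ℂ} (hz : z ≠ 0) :
    ∃ k : ℤ, parg z⁻¹ = -parg z + 2 * Real.pi * k := by
  have hinv := Complex.arg_inv z
  unfold parg
  split_ifs with h1 h2 h2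
  · exact ⟨-1, by push_cast; ring⟩
  · rw [hinv, if_neg h2] at h1
    have := Complex.neg_pi_lt_arg z
    exact absurd h1 (by linarith)
  · rw [hinv, if_pos h2] at h1
    exact absurd rfl h1
  · exact ⟨0, by rw [hinv, if_neg h2]; push_cast; ring⟩

lemma mfun_shift (N : ℤ) (u : ℂ) (t : ℝ) (k : ℤ)
    (h : parg u = t + 2 * Real.pi * k) :
    mfun N u = ⌈(-(N : ℝ) * t) / (2 * Real.pi)⌉ - N * k := by
  have hpi : (2 * Real.pi) ≠ 0 := by positivity
  have : (-(N : ℝ) * parg u) / (2 * Real.pi)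
      = (-(N : ℝ) * t) / (2 * Real.pi) + ((-(N * k) : ℤ) : ℝ) := by
    rw [h]; push_cast; field_simp; ring
  unfold mfun
  rw [this, Int.ceil_add_intCast]; ring

theorem stmt1 (N : ℤ) (hN : 3 ≤ N) (z : ℂ) (hz : z ≠ 0)
    (h : mfun N z + mfun N z⁻¹ ≡ 0 [ZMOD N]) :
    ∀ w : ℂ, w ≠ 0 → mfun N (z * w) ≡ mfun N z + mfun N w [ZMOD N] := by
  set x : ℝ := (-(N : ℝ) * parg z) / (2 * Real.pi) with hx
  -- Step 1: x is an integer
  obtain ⟨j, hj⟩ := parg_inv hz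
  have hminv : mfun N z⁻¹ = ⌈-x⌉ - N * j := by
    have := mfun_shift N z⁻¹ (-parg z) j hj
    rw [this]
    congr 2
    rw [hx]; ring_nf
  have hmz : mfun N z = ⌈x⌉ := rfl
  have hdvd : N ∣ ⌈x⌉ + ⌈-x⌉ := by
    obtain ⟨c, hc⟩ := Int.ModEq.dvd h
    rw [hmz, hminv] at hc
    exact ⟨j - c, by linear_combination -hc⟩
  have hceil : ⌈x⌉ + ⌈-x⌉ = 0 := by
    have h1 : ⌈-x⌉ = -⌊x⌋ := Int.ceil_neg
    have h2 : ⌊x⌋ ≤ ⌈x⌉ := Int.floor_le_ceil x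
    have h3 : ⌈x⌉ ≤ ⌊x⌋ + 1 := Int.ceil_le_floor_add_one x
    have hcases : ⌈x⌉ + ⌈-x⌉ = 0 ∨ ⌈x⌉ + ⌈-x⌉ = 1 := by omega
    rcases hcases with h0 | h0
    · exact h0
    · exfalso
      rw [h0] at hdvd
      have := Int.le_of_dvd one_pos hdvd
      omega
  obtain ⟨a, ha⟩ : ∃ a : ℤ, x = (a : ℝ) := by
    refine ⟨⌈x⌉, ?_⟩
    have h1 : ⌈-x⌉ = -⌊x⌋ := Int.ceil_neg
    have hfc : ⌊x⌋ = ⌈x⌉ := by omega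
    have h2 : (⌊x⌋ : ℝ) ≤ x := Int.floor_le x
    have h3 : x ≤ (⌈x⌉ : ℝ) := Int.le_ceil x
    rw [hfc] at h2
    linarith
  have hmza : mfun N z = a := by rw [hmz, ha, Int.ceil_intCast]
  -- Step 2: the main claim
  intro w hw
  obtain ⟨k, hk⟩ := parg_mul hz hw
  have hmzw : mfun N (z * w) = ⌈x + (-(N : ℝ) * parg w) / (2 * Real.pi)⌉ - N * k := by
    have := mfun_shift N (z * w) (parg z + parg w) k hk
    rw [this]
    congr 2
    rw [hx]
    have hpi : (2 * Real.pi) ≠ 0 := by positivity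
    field_simp
    ring
  have hsum : ⌈x + (-(N : ℝ) * parg w) / (2 * Real.pi)⌉ = a + mfun N w := by
    rw [ha, add_comm, Int.ceil_add_intCast, add_comm]
    rfl
  rw [hmzw, hsum, hmza]
  exact Int.modEq_iff_dvd.mpr ⟨k, by ring⟩
end

section
/- Let N ≥ 3 be an integer and let m(z) := ⌈-N·arg(z)/(2π)⌉ for nonzero complex z, where arg(z) ∈ [-π, π). Let u, v, w be nonzero complex numbers. If m(u⁻¹v) + m(v⁻¹w) ≡ m(w) - m(u) (mod N), then m(u⁻¹w) ≡ m(w) - m(u) (mod N). -/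
lemma parg_angle (z : ℂ) : (parg z : Real.Angle) = (Complex.arg z : Real.Angle) := by
  unfold parg
  split_ifs with h
  · rw [h, Real.Angle.coe_neg, Real.Angle.neg_coe_pi]
  · rfl

lemma mfun_mul (N : ℤ) {a b : ℂ} (ha : a ≠ 0) (hb : b ≠ 0) :
    ∃ k : ℤ, mfun N (a⁻¹ * b) = ⌈(-(N : ℝ) * (parg b - parg a)) / (2 * Real.pi)⌉ - N * k := by
  have hangle : (parg (a⁻¹ * b) : Real.Angle) = ((parg b - parg a : ℝ) : Real.Angle) := by
    rw [parg_angle, Complex.arg_mul_coe_angle (inv_ne_zero ha) hb, Complex.arg_inv_coe_angle,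
      Real.Angle.coe_sub, ← parg_angle, ← parg_angle]
    abel
  rw [Real.Angle.angle_eq_iff_two_pi_dvd_sub] at hangle
  obtain ⟨k, hk⟩ := hangle
  refine ⟨k, ?_⟩
  unfold mfun
  have hp : (2 : ℝ) * Real.pi ≠ 0 := by positivity
  have hparg : parg (a⁻¹ * b) = parg b - parg a + 2 * Real.pi * k := by linarith
  have heq : (-(N : ℝ) * parg (a⁻¹ * b)) / (2 * Real.pi)
      = (-(N : ℝ) * (parg b - parg a)) / (2 * Real.pi) + ((-(N * k) : ℤ) : ℝ) := by
    rw [hparg]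
    push_cast
    field_simp
    ring
  rw [heq, Int.ceil_add_intCast]
  norm_num
  ring

lemma ceil_add_cases (x y : ℝ) : ⌈x⌉ + ⌈y⌉ = ⌈x + y⌉ ∨ ⌈x⌉ + ⌈y⌉ = ⌈x + y⌉ + 1 := by
  have h1 : ⌈x + y⌉ ≤ ⌈x⌉ + ⌈y⌉ :=
    Int.ceil_le.mpr (by push_cast; exact add_le_add (Int.le_ceil x) (Int.le_ceil y))
  have h2 : ⌈x⌉ + ⌈y⌉ - 2 < ⌈x + y⌉ := by
    rw [Int.lt_ceil]
    push_cast
    have := Int.ceil_lt_add_one x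
    have := Int.ceil_lt_add_one y
    linarith
  omega

theorem stmt3 (N : ℤ) (hN : 3 ≤ N) (u v w : ℂ) (hu : u ≠ 0) (hv : v ≠ 0) (hw : w ≠ 0)
    (h : mfun N (u⁻¹ * v) + mfun N (v⁻¹ * w) ≡ mfun N w - mfun N u [ZMOD N]) :
    mfun N (u⁻¹ * w) ≡ mfun N w - mfun N u [ZMOD N] := by
  obtain ⟨k1, h1⟩ := mfun_mul N hu hv
  obtain ⟨k2, h2⟩ := mfun_mul N hv hw
  obtain ⟨k3, h3⟩ := mfun_mul N hu hw
  set α := parg u with hα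
  set β := parg v with hβ
  set γ := parg w with hγ
  set G : ℝ → ℤ := fun t => ⌈(-(N : ℝ) * t) / (2 * Real.pi)⌉ with hG
  have hmw : mfun N w = G γ := rfl
  have hmu : mfun N u = G α := rfl
  have e1 : G (β - α) + G (γ - β) = G (γ - α) ∨
      G (β - α) + G (γ - β) = G (γ - α) + 1 := by
    have hx : (-(N : ℝ) * (β - α)) / (2 * Real.pi) + (-(N : ℝ) * (γ - β)) / (2 * Real.pi)
        = (-(N : ℝ) * (γ - α)) / (2 * Real.pi) := by ring
    have := ceil_add_cases ((-(N : ℝ) * (β - α)) / (2 * Real.pi))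
      ((-(N : ℝ) * (γ - β)) / (2 * Real.pi))
    rw [hx] at this
    exact this
  have e2 : G (γ - α) + G α = G γ ∨ G (γ - α) + G α = G γ + 1 := by
    have hx : (-(N : ℝ) * (γ - α)) / (2 * Real.pi) + (-(N : ℝ) * α) / (2 * Real.pi)
        = (-(N : ℝ) * γ) / (2 * Real.pi) := by ring
    have := ceil_add_cases ((-(N : ℝ) * (γ - α)) / (2 * Real.pi))
      ((-(N : ℝ) * α) / (2 * Real.pi))
    rw [hx] at this
    exact this
  -- extract divisibility from h
  have hdvd : N ∣ (mfun N w - mfun N u) - (mfun N (u⁻¹ * v) + mfun N (v⁻¹ * w)) :=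
    Int.ModEq.dvd h
  rw [h1, h2, hmw, hmu] at hdvd
  -- show both epsilons are zero
  obtain ⟨ε₁, hε₁, he1⟩ : ∃ ε₁ : ℤ, (ε₁ = 0 ∨ ε₁ = 1) ∧
      G (β - α) + G (γ - β) = G (γ - α) + ε₁ := by
    rcases e1 with e | e
    · exact ⟨0, Or.inl rfl, by omega⟩
    · exact ⟨1, Or.inr rfl, e⟩
  obtain ⟨ε₂, hε₂, he2⟩ : ∃ ε₂ : ℤ, (ε₂ = 0 ∨ ε₂ = 1) ∧
      G (γ - α) + G α = G γ + ε₂ := by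
    rcases e2 with e | e
    · exact ⟨0, Or.inl rfl, by omega⟩
    · exact ⟨1, Or.inr rfl, e⟩
  have hdvd' : N ∣ G γ - G α - ((G (β - α) - N * k1) + (G (γ - β) - N * k2)) := hdvd
  have hdvd2 : N ∣ ε₁ + ε₂ := by
    have hkey : G γ - G α - ((G (β - α) - N * k1) + (G (γ - β) - N * k2))
        = -(ε₁ + ε₂) + N * (k1 + k2) := by linarith
    rw [hkey] at hdvd'
    have h'' : N ∣ -(ε₁ + ε₂) := (dvd_add_right ⟨k1 + k2, rfl⟩).mp (by rwa [add_comm] at hdvd')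
    exact dvd_neg.mp h''
  have hzero : ε₁ = 0 ∧ ε₂ = 0 := by
    by_contra hc
    have hpos : 0 < ε₁ + ε₂ := by omega
    have := Int.le_of_dvd hpos hdvd2
    omega
  rw [h3, hmw, hmu]
  have hG2 : G γ - G α = G (γ - α) := by omega
  rw [hG2]
  exact Int.modEq_iff_dvd.mpr ⟨k3, by ring⟩
end

section
/- Let N ≥ 3 be an integer and let m(z) := ⌈-N·arg(z)/(2π)⌉ for nonzero complex z, where arg(z) ∈ [-π, π). Let u, v, w be nonzero complex numbers satisfying the four congruences m(u⁻¹w) + m(uw⁻¹) ≡ 0, m(u⁻¹v) ≡ m(v) - m(u), m(u⁻¹w) ≡ m(w) - m(u), and m(v⁻¹w) ≡ m(w) - m(v) (all modulo N). Then m(v⁻¹u) + m(vu⁻¹) ≡ 0 (mod N). -/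
open Real

lemma parg_coe (z : ℂ) : ((parg z : ℝ) : Real.Angle) = (Complex.arg z : Real.Angle) := by
  unfold parg
  split
  · rename_i h
    rw [h, Real.Angle.coe_neg, Real.Angle.neg_coe_pi]
  · rfl

lemma parg_rel (a b : ℂ) (ha : a ≠ 0) (hb : b ≠ 0) :
    ∃ k : ℤ, parg (a⁻¹ * b) = parg b - parg a + 2 * π * k := by
  have h : ((parg (a⁻¹ * b) : ℝ) : Real.Angle) = ((parg b - parg a : ℝ) : Real.Angle) := by
    rw [parg_coe, Complex.arg_mul_coe_angle (inv_ne_zero ha) hb, Complex.arg_inv_coe_angle,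
      Real.Angle.coe_sub, ← parg_coe a, ← parg_coe b]
    abel
  rw [Real.Angle.angle_eq_iff_two_pi_dvd_sub] at h
  obtain ⟨k, hk⟩ := h
  exact ⟨k, by linarith⟩

lemma mfun_div (N : ℤ) (a b : ℂ) (ha : a ≠ 0) (hb : b ≠ 0) :
    mfun N (a⁻¹ * b) ≡
      ⌈(-(N : ℝ) * parg b) / (2 * π) - (-(N : ℝ) * parg a) / (2 * π)⌉ [ZMOD N] := by
  obtain ⟨k, hk⟩ := parg_rel a b ha hb
  have hπ : (2 * π) ≠ 0 := by positivity
  have key : (-(N : ℝ) * parg (a⁻¹ * b)) / (2 * π)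
      = ((-(N : ℝ) * parg b) / (2 * π) - (-(N : ℝ) * parg a) / (2 * π)) + ((-(N * k) : ℤ) : ℝ) := by
    rw [hk]
    push_cast
    field_simp
    ring
  unfold mfun
  rw [key, Int.ceil_add_intCast]
  have h0 : (-(N * k) : ℤ) ≡ 0 [ZMOD N] := Int.modEq_zero_iff_dvd.2 ⟨-k, by ring⟩
  simpa using (Int.ModEq.add_left _ h0)

lemma ceil_sub_mem (s t : ℝ) : ⌈s - t⌉ - (⌈s⌉ - ⌈t⌉) = 0 ∨ ⌈s - t⌉ - (⌈s⌉ - ⌈t⌉) = 1 := by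
  have h1 : ⌈s⌉ ≤ ⌈s - t⌉ + ⌈t⌉ := by
    have : s ≤ ((⌈s - t⌉ + ⌈t⌉ : ℤ) : ℝ) := by
      push_cast
      have := Int.le_ceil (s - t)
      have := Int.le_ceil t
      linarith
    exact_mod_cast Int.ceil_le.2 this
  have h2 : ⌈s - t⌉ ≤ ⌈s⌉ - ⌈t⌉ + 1 := by
    have : s - t ≤ ((⌈s⌉ - ⌈t⌉ + 1 : ℤ) : ℝ) := by
      push_cast
      have := Int.le_ceil s
      have := Int.ceil_lt_add_one t
      linarith
    exact_mod_cast Int.ceil_le.2 this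
  omega

lemma ceil_add_neg_mem (t : ℝ) : ⌈t⌉ + ⌈-t⌉ = 0 ∨ ⌈t⌉ + ⌈-t⌉ = 1 := by
  have h1 : 0 ≤ ⌈t⌉ + ⌈-t⌉ := by
    have : (0 : ℝ) ≤ ((⌈t⌉ + ⌈-t⌉ : ℤ) : ℝ) := by
      push_cast
      have := Int.le_ceil t
      have := Int.le_ceil (-t)
      linarith
    exact_mod_cast this
  have h2 : ⌈-t⌉ ≤ 1 - ⌈t⌉ := by
    have : -t ≤ ((1 - ⌈t⌉ : ℤ) : ℝ) := by
      push_cast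
      have := Int.ceil_lt_add_one t
      linarith
    exact_mod_cast Int.ceil_le.2 this
  omega

lemma eq_zero_of_modeq (N D : ℤ) (hN : 3 ≤ N) (hD : D = 0 ∨ D = 1)
    (h : D ≡ 0 [ZMOD N]) : D = 0 := by
  rcases hD with h0 | h1
  · exact h0
  · exfalso
    have : N ∣ D := Int.modEq_zero_iff_dvd.1 h
    rw [h1] at this
    have := Int.le_of_dvd one_pos this
    omega

theorem stmt4 (N : ℤ) (hN : 3 ≤ N) (u v w : ℂ) (hu : u ≠ 0) (hv : v ≠ 0) (hw : w ≠ 0)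
    (h1 : mfun N (u⁻¹ * w) + mfun N (u * w⁻¹) ≡ 0 [ZMOD N])
    (h2 : mfun N (u⁻¹ * v) ≡ mfun N v - mfun N u [ZMOD N])
    (h3 : mfun N (u⁻¹ * w) ≡ mfun N w - mfun N u [ZMOD N])
    (h4 : mfun N (v⁻¹ * w) ≡ mfun N w - mfun N v [ZMOD N]) :
    mfun N (v⁻¹ * u) + mfun N (v * u⁻¹) ≡ 0 [ZMOD N] := by
  set A : ℝ := (-(N : ℝ) * parg u) / (2 * π) with hA
  set B : ℝ := (-(N : ℝ) * parg v) / (2 * π) with hB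
  set C : ℝ := (-(N : ℝ) * parg w) / (2 * π) with hC
  have mu : mfun N u = ⌈A⌉ := rfl
  have mv : mfun N v = ⌈B⌉ := rfl
  have mw : mfun N w = ⌈C⌉ := rfl
  have cuw : mfun N (u⁻¹ * w) ≡ ⌈C - A⌉ [ZMOD N] := mfun_div N u w hu hw
  have cwu : mfun N (u * w⁻¹) ≡ ⌈A - C⌉ [ZMOD N] := by
    rw [mul_comm]; exact mfun_div N w u hw hu
  have cuv : mfun N (u⁻¹ * v) ≡ ⌈B - A⌉ [ZMOD N] := mfun_div N u v hu hv
  have cvw : mfun N (v⁻¹ * w) ≡ ⌈C - B⌉ [ZMOD N] := mfun_div N v w hv hw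
  have cvu : mfun N (v⁻¹ * u) ≡ ⌈A - B⌉ [ZMOD N] := mfun_div N v u hv hu
  have cuv' : mfun N (v * u⁻¹) ≡ ⌈B - A⌉ [ZMOD N] := by
    rw [mul_comm]; exact mfun_div N u v hu hv
  -- h1 ⟹ ⌈C-A⌉ + ⌈A-C⌉ = 0
  have e1 : ⌈C - A⌉ + ⌈A - C⌉ = 0 := by
    apply eq_zero_of_modeq N _ hN
    · have := ceil_add_neg_mem (C - A)
      simpa [neg_sub] using this
    · exact (cuw.add cwu).symm.trans h1
  -- h2 ⟹ ⌈B-A⌉ = ⌈B⌉ - ⌈A⌉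
  have e2 : ⌈B - A⌉ = ⌈B⌉ - ⌈A⌉ := by
    have hd := eq_zero_of_modeq N (⌈B - A⌉ - (⌈B⌉ - ⌈A⌉)) hN (ceil_sub_mem B A)
      (by
        have : ⌈B - A⌉ ≡ ⌈B⌉ - ⌈A⌉ [ZMOD N] := by
          rw [← mv, ← mu]; exact cuv.symm.trans h2
        simpa using this.sub (Int.ModEq.refl (⌈B⌉ - ⌈A⌉)))
    omega
  have e3 : ⌈C - A⌉ = ⌈C⌉ - ⌈A⌉ := by
    have hd := eq_zero_of_modeq N (⌈C - A⌉ - (⌈C⌉ - ⌈A⌉)) hN (ceil_sub_mem C A)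
      (by
        have : ⌈C - A⌉ ≡ ⌈C⌉ - ⌈A⌉ [ZMOD N] := by
          rw [← mw, ← mu]; exact cuw.symm.trans h3
        simpa using this.sub (Int.ModEq.refl (⌈C⌉ - ⌈A⌉)))
    omega
  have e4 : ⌈C - B⌉ = ⌈C⌉ - ⌈B⌉ := by
    have hd := eq_zero_of_modeq N (⌈C - B⌉ - (⌈C⌉ - ⌈B⌉)) hN (ceil_sub_mem C B)
      (by
        have : ⌈C - B⌉ ≡ ⌈C⌉ - ⌈B⌉ [ZMOD N] := by
          rw [← mw, ← mv]; exact cvw.symm.trans h4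
        simpa using this.sub (Int.ModEq.refl (⌈C⌉ - ⌈B⌉)))
    omega
  -- real arithmetic: from e1, c(C-A)=0
  have hca : ((⌈C - A⌉ : ℤ) : ℝ) = C - A := by
    have r1 : C - A ≤ ((⌈C - A⌉ : ℤ) : ℝ) := Int.le_ceil _
    have r2 : A - C ≤ ((⌈A - C⌉ : ℤ) : ℝ) := Int.le_ceil _
    have r3 : ((⌈C - A⌉ : ℤ) : ℝ) + ((⌈A - C⌉ : ℤ) : ℝ) = 0 := by exact_mod_cast e1
    linarith
  -- show c(B-A)=0
  have hba : ((⌈B - A⌉ : ℤ) : ℝ) = B - A := by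
    have r1 : B - A ≤ ((⌈B - A⌉ : ℤ) : ℝ) := Int.le_ceil _
    have r4 : C - B ≤ ((⌈C - B⌉ : ℤ) : ℝ) := Int.le_ceil _
    have c2 : ((⌈B - A⌉ : ℤ) : ℝ) = (⌈B⌉ : ℝ) - (⌈A⌉ : ℝ) := by exact_mod_cast e2
    have c3 : ((⌈C - A⌉ : ℤ) : ℝ) = (⌈C⌉ : ℝ) - (⌈A⌉ : ℝ) := by exact_mod_cast e3
    have c4 : ((⌈C - B⌉ : ℤ) : ℝ) = (⌈C⌉ : ℝ) - (⌈B⌉ : ℝ) := by exact_mod_cast e4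
    linarith
  have habneg : ⌈A - B⌉ = -⌈B - A⌉ := by
    have : A - B = ((-⌈B - A⌉ : ℤ) : ℝ) := by push_cast; linarith
    rw [this, Int.ceil_intCast]
  have final : ⌈A - B⌉ + ⌈B - A⌉ = 0 := by omega
  calc mfun N (v⁻¹ * u) + mfun N (v * u⁻¹)
      ≡ ⌈A - B⌉ + ⌈B - A⌉ [ZMOD N] := cvu.add cuv'
    _ = 0 := final
end

section
/- Let r ≥ 1, let σ be a permutation of {1,...,r}, let c_1, ..., c_{r+1} be real numbers, let p ∈ {1,...,r+1}, and let δ be a nonzero real number. In ℝ^{r+1} with standard basis e_1, ..., e_{r+1}, define φ_t := Σ_{j=2}^{t} e_{σ(j-1)} + c_t·e_{r+1} for 1 ≤ t ≤ r+1 (so φ_1 = c_1·e_{r+1}), and φ_{r+2} := φ_p + δ·e_{r+1}. Then the r+2 vectors φ_1, ..., φ_{r+2} are affinely independent in ℝ^{r+1}. -/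
/-- `φ_t := Σ_{j=2}^{t} e_{σ(j-1)} + c_t·e_{r+1}` for `1 ≤ t ≤ r+1`, written 0-indexed:
for `t : Fin (r+1)`, `psi r σ c t = Σ_{j : Fin r, j < t} e_{(σ j).castSucc} + c t • e_{last}`. -/
noncomputable def psi (r : ℕ) (σ : Equiv.Perm (Fin r)) (c : Fin (r + 1) → ℝ)
    (t : Fin (r + 1)) : Fin (r + 1) → ℝ :=
  (∑ j : Fin r, if (j : ℕ) < (t : ℕ) then Pi.single ((σ j).castSucc) (1 : ℝ) else 0)
    + c t • (Pi.single (Fin.last r) (1 : ℝ) : Fin (r + 1) → ℝ)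

theorem psi_apply_castSucc (r : ℕ) (σ : Equiv.Perm (Fin r)) (c : Fin (r + 1) → ℝ)
    (t : Fin (r + 1)) (k : Fin r) :
    psi r σ c t ((σ k).castSucc) = if (k : ℕ) < (t : ℕ) then 1 else 0 := by
  unfold psi
  have h1 : (Pi.single (Fin.last r) (1 : ℝ) : Fin (r + 1) → ℝ) ((σ k).castSucc) = 0 := by
    rw [Pi.single_apply, if_neg (Fin.castSucc_lt_last (σ k)).ne]
  simp only [Pi.add_apply, Finset.sum_apply, Pi.smul_apply, h1, smul_eq_mul, mul_zero, add_zero]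
  have h2 : ∀ j : Fin r,
      ((if (j : ℕ) < (t : ℕ) then Pi.single ((σ j).castSucc) (1 : ℝ) else 0) :
          Fin (r + 1) → ℝ) ((σ k).castSucc)
        = if j = k then (if (k : ℕ) < (t : ℕ) then 1 else 0) else 0 := by
    intro j
    rw [ite_apply, Pi.zero_apply, Pi.single_apply]
    rcases eq_or_ne j k with h | h
    · subst h; simp
    · have hne : (σ k).castSucc ≠ (σ j).castSucc := by
        simp [Fin.castSucc_inj, σ.injective.ne (Ne.symm h)]
      rw [if_neg hne, if_neg h, ite_self]
  rw [Finset.sum_congr rfl (fun j _ => h2 j), Finset.sum_ite_eq' Finset.univ k,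
    if_pos (Finset.mem_univ k)]

theorem psi_apply_last (r : ℕ) (σ : Equiv.Perm (Fin r)) (c : Fin (r + 1) → ℝ)
    (t : Fin (r + 1)) : psi r σ c t (Fin.last r) = c t := by
  unfold psi
  have h2 : ∀ j : Fin r,
      ((if (j : ℕ) < (t : ℕ) then Pi.single ((σ j).castSucc) (1 : ℝ) else 0) :
        Fin (r + 1) → ℝ) (Fin.last r) = 0 := by
    intro j
    rw [ite_apply, Pi.zero_apply, Pi.single_apply, if_neg (Fin.castSucc_lt_last (σ j)).ne',
      ite_self]
  simp [Finset.sum_apply, Finset.sum_congr rfl (fun j _ => h2 j)]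

theorem stmt11 (r : ℕ) (hr : 1 ≤ r) (σ : Equiv.Perm (Fin r)) (c : Fin (r + 1) → ℝ)
    (p : Fin (r + 1)) (δ : ℝ) (hδ : δ ≠ 0) :
    AffineIndependent ℝ
      (Fin.snoc (psi r σ c)
          (psi r σ c p + δ • (Pi.single (Fin.last r) (1 : ℝ) : Fin (r + 1) → ℝ)) :
        Fin (r + 2) → (Fin (r + 1) → ℝ)) := by
  rw [affineIndependent_iff]
  intro s w hs hv i hi
  set F : Fin (r + 2) → (Fin (r + 1) → ℝ) :=
    (Fin.snoc (psi r σ c)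
      (psi r σ c p + δ • (Pi.single (Fin.last r) (1 : ℝ) : Fin (r + 1) → ℝ))) with hF
  set w' : Fin (r + 2) → ℝ := fun i => if i ∈ s then w i else 0 with hw'
  have hw0 : ∑ i, w' i = 0 := by
    rw [hw']; simpa [Finset.sum_ite_mem] using hs
  have hv0 : ∑ i, w' i • F i = 0 := by
    rw [hw']
    simp only [ite_smul, zero_smul]
    rw [Finset.sum_ite_mem, Finset.univ_inter]
    exact hv
  set u : Fin (r + 1) → ℝ := fun t => w' t.castSucc with hu'
  set a : ℝ := w' (Fin.last (r + 1)) with ha'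
  have hsum : ∑ t, u t + a = 0 := by
    rw [Fin.sum_univ_castSucc] at hw0; exact hw0
  have hvsum : ∑ t, u t • psi r σ c t
      + a • (psi r σ c p + δ • (Pi.single (Fin.last r) (1 : ℝ) : Fin (r + 1) → ℝ)) = 0 := by
    rw [Fin.sum_univ_castSucc] at hv0
    simpa only [hF, Fin.snoc_castSucc, Fin.snoc_last] using hv0
  have hE : ∀ k : Fin r,
      (∑ t : Fin (r + 1), if (k : ℕ) + 1 ≤ (t : ℕ) then u t else 0)
        + (if (k : ℕ) < (p : ℕ) then a else 0) = 0 := by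
    intro k
    have h0 := congrFun hvsum ((σ k).castSucc)
    have hes : (Pi.single (Fin.last r) (1 : ℝ) : Fin (r + 1) → ℝ) ((σ k).castSucc) = 0 := by
      rw [Pi.single_apply, if_neg (Fin.castSucc_lt_last (σ k)).ne]
    simp only [Pi.add_apply, Finset.sum_apply, Pi.smul_apply, Pi.zero_apply, smul_eq_mul,
      psi_apply_castSucc, hes, mul_zero, add_zero] at h0
    have h2 : ∀ t : Fin (r + 1),
        (if (k : ℕ) + 1 ≤ (t : ℕ) then u t else 0)
          = u t * (if (k : ℕ) < (t : ℕ) then 1 else 0) := by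
      intro t
      rcases lt_or_ge (k : ℕ) (t : ℕ) with h | h
      · rw [if_pos h, if_pos (by omega), mul_one]
      · rw [if_neg (by omega), if_neg (by omega), mul_zero]
    have h3 : (if (k : ℕ) < (p : ℕ) then a else 0)
        = a * (if (k : ℕ) < (p : ℕ) then 1 else 0) := by
      split_ifs <;> ring
    rw [Finset.sum_congr rfl (fun t _ => h2 t), h3]
    exact h0
  have hlast : ∑ t : Fin (r + 1), u t * c t + a * (c p + δ) = 0 := by
    have h0 := congrFun hvsum (Fin.last r)
    have hes : (Pi.single (Fin.last r) (1 : ℝ) : Fin (r + 1) → ℝ) (Fin.last r) = 1 := by simp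
    simpa [Finset.sum_apply, psi_apply_last, hes, mul_add] using h0
  have hA : ∀ k, k ≤ r + 1 →
      (∑ t : Fin (r + 1), if k ≤ (t : ℕ) then u t else 0)
        = if k ≤ (p : ℕ) then -a else 0 := by
    intro k hk
    match k with
    | 0 =>
      have hz : ∀ t : Fin (r + 1), (if 0 ≤ (t : ℕ) then u t else 0) = u t :=
        fun t => if_pos (Nat.zero_le _)
      rw [if_pos (Nat.zero_le _), Finset.sum_congr rfl (fun t _ => hz t)]
      linarith [hsum]
    | (j+1) =>
      rcases lt_or_eq_of_le (Nat.succ_le_succ_iff.mp hk) with hj | hj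
      · have h0 := hE ⟨j, hj⟩
        simp only [Fin.val_mk] at h0
        have h2 : (if j + 1 ≤ (p : ℕ) then -a else 0) = -(if j < (p : ℕ) then a else 0) := by
          split_ifs <;> (try (exfalso; omega)) <;> ring
        rw [h2]; linarith [h0]
      · subst hj
        rw [if_neg (by omega)]
        apply Finset.sum_eq_zero
        intro t _
        rw [if_neg (by omega)]
  have hu : ∀ t : Fin (r + 1), u t = if t = p then -a else 0 := by
    intro t
    have h : ∀ x : Fin (r + 1),
        (if (t : ℕ) ≤ (x : ℕ) then u x else 0)
          = (if x = t then u x else 0) + (if (t : ℕ) + 1 ≤ (x : ℕ) then u x else 0) := by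
      intro x
      rcases eq_or_ne x t with h | h
      · subst h; rw [if_pos le_rfl, if_pos rfl, if_neg (by omega)]; ring
      · have hne : (x : ℕ) ≠ (t : ℕ) := fun hc => h (Fin.ext hc)
        rw [if_neg h]
        split_ifs <;> (try (exfalso; omega)) <;> ring
    have hstep : (∑ x : Fin (r + 1), if (t : ℕ) ≤ (x : ℕ) then u x else 0)
        = u t + (∑ x : Fin (r + 1), if (t : ℕ) + 1 ≤ (x : ℕ) then u x else 0) := by
      rw [Finset.sum_congr rfl (fun x _ => h x), Finset.sum_add_distrib,
        Finset.sum_ite_eq' Finset.univ t, if_pos (Finset.mem_univ t)]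
    have h1 := hA (t : ℕ) (by omega)
    have h2 := hA ((t : ℕ) + 1) (by omega)
    rw [hstep, h2] at h1
    have : u t = (if (t : ℕ) ≤ (p : ℕ) then -a else 0)
        - (if (t : ℕ) + 1 ≤ (p : ℕ) then -a else 0) := by linarith
    rw [this]
    simp only [Fin.ext_iff]
    split_ifs <;> (try (exfalso; omega)) <;> ring
  have ha0 : a = 0 := by
    have h1 : ∑ t : Fin (r + 1), u t * c t = -a * c p := by
      rw [Finset.sum_congr rfl (fun t _ => by rw [hu t, ite_mul, zero_mul]),
        Finset.sum_ite_eq' Finset.univ p, if_pos (Finset.mem_univ p)]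
    rw [h1] at hlast
    have : a * δ = 0 := by ring_nf at hlast ⊢; linarith
    exact (mul_eq_zero.mp this).resolve_right hδ
  have hwz : ∀ i, w' i = 0 := by
    intro i
    refine Fin.lastCases ?_ ?_ i
    · exact ha0
    · intro t
      have := hu t
      rw [ha0] at this
      simpa using this
  have := hwz i
  simpa [hw', hi] using this
end

section
/- Let r ≥ 1, let σ be a permutation of {1,...,r}, let c_1, ..., c_{r+1} be real numbers, let p ∈ {1,...,r+1}, and let δ > 0. In ℝ^{r+1} define φ_t := Σ_{j=2}^{t} e_{σ(j-1)} + c_t·e_{r+1} for 1 ≤ t ≤ r+1 and φ_{r+2} := φ_p + δ·e_{r+1}, and set P_1 := convex hull of {φ_1,...,φ_{r+1}} and P_2 := convex hull of {φ_t : 1 ≤ t ≤ r+2, t ≠ p}. If x^{(1)}, ..., x^{(r)} ∈ [0,1] satisfy x^{(σ(1))} ≥ x^{(σ(2))} ≥ ... ≥ x^{(σ(r))}, then there exist unique real numbers y_1 and y_2 such that (x^{(1)},...,x^{(r)}, y_1) ∈ P_1 and (x^{(1)},...,x^{(r)}, y_2) ∈ P_2; moreover y_1 ≤ y_2. -/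
/-- The full family `φ_1, …, φ_{r+2}`, where `φ_{r+2} := φ_p + δ·e_{r+1}`. -/
noncomputable def phiFull (r : ℕ) (σ : Equiv.Perm (Fin r)) (c : Fin (r + 1) → ℝ)
    (p : Fin (r + 1)) (δ : ℝ) : Fin (r + 2) → (Fin (r + 1) → ℝ) :=
  Fin.snoc (psi r σ c)
    (psi r σ c p + δ • (Pi.single (Fin.last r) (1 : ℝ) : Fin (r + 1) → ℝ))

namespace Stmt12Aux

variable {r : ℕ}

noncomputable def aF (σ : Equiv.Perm (Fin r)) (x : Fin r → ℝ) (k : ℕ) : ℝ :=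
  if h0 : k = 0 then 1 else if h : k ≤ r then x (σ ⟨k - 1, by omega⟩) else 0

noncomputable def wF (σ : Equiv.Perm (Fin r)) (x : Fin r → ℝ) (t : Fin (r + 1)) : ℝ :=
  aF σ x t - aF σ x (t + 1)

noncomputable def Tsum (μ : Fin (r + 1) → ℝ) (k : ℕ) : ℝ :=
  ∑ t : Fin (r + 1), if k ≤ (t : ℕ) then μ t else 0

lemma Tsum_zero (μ : Fin (r + 1) → ℝ) : Tsum μ 0 = ∑ t, μ t := by
  simp [Tsum]

lemma Tsum_of_gt (μ : Fin (r + 1) → ℝ) {k : ℕ} (hk : r < k) : Tsum μ k = 0 := by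
  unfold Tsum
  apply Finset.sum_eq_zero
  intro t _
  rw [if_neg (by have := t.isLt; omega)]

lemma Tsum_succ (μ : Fin (r + 1) → ℝ) {k : ℕ} (hk : k ≤ r) :
    Tsum μ k = μ ⟨k, by omega⟩ + Tsum μ (k + 1) := by
  have key : Tsum μ k - Tsum μ (k + 1) = μ ⟨k, by omega⟩ := by
    unfold Tsum
    rw [← Finset.sum_sub_distrib]
    rw [Finset.sum_congr rfl
      (g := fun t => if t = (⟨k, by omega⟩ : Fin (r + 1)) then μ t else 0) ?_]
    · rw [Finset.sum_ite_eq' Finset.univ]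
      simp
    · intro t _
      simp only [Fin.ext_iff]
      split_ifs <;> (first | ring1 | (exfalso; omega))
  linarith

lemma psi_apply_castSucc (σ : Equiv.Perm (Fin r)) (c : Fin (r + 1) → ℝ)
    (t : Fin (r + 1)) (i : Fin r) :
    psi r σ c t i.castSucc = if ((σ.symm i : ℕ) < (t : ℕ)) then 1 else 0 := by
  unfold psi
  simp only [Pi.add_apply, Finset.sum_apply, Pi.smul_apply, smul_eq_mul,
    apply_ite (fun f : Fin (r + 1) → ℝ => f i.castSucc), Pi.single_apply, Pi.zero_apply]
  rw [if_neg (Fin.castSucc_lt_last i).ne, mul_zero, add_zero]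
  rw [Finset.sum_congr rfl
    (g := fun j => if j = σ.symm i then (if ((σ.symm i : ℕ) < (t : ℕ)) then (1:ℝ) else 0) else 0) ?_]
  · rw [Finset.sum_ite_eq' Finset.univ]
    simp
  · intro j _
    by_cases hj : j = σ.symm i
    · subst hj
      simp
    · have h2 : i.castSucc ≠ (σ j).castSucc := by
        rw [ne_eq, Fin.castSucc_inj]
        intro h
        exact hj (by rw [h, Equiv.symm_apply_apply])
      simp [h2, hj]

lemma psi_apply_last (σ : Equiv.Perm (Fin r)) (c : Fin (r + 1) → ℝ) (t : Fin (r + 1)) :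
    psi r σ c t (Fin.last r) = c t := by
  unfold psi
  simp only [Pi.add_apply, Finset.sum_apply, Pi.smul_apply, smul_eq_mul,
    apply_ite (fun f : Fin (r + 1) → ℝ => f (Fin.last r)), Pi.single_apply, Pi.zero_apply]
  have hz : ∀ j : Fin r, (if (j : ℕ) < (t : ℕ) then (if Fin.last r = (σ j).castSucc then (1:ℝ) else 0) else 0) = 0 := by
    intro j
    rw [if_neg (Fin.castSucc_lt_last (σ j)).ne']; simp
  simp only [hz, Finset.sum_const_zero, zero_add]
  simp

lemma z_castSucc (σ : Equiv.Perm (Fin r)) (c : Fin (r + 1) → ℝ) (μ : Fin (r + 1) → ℝ)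
    (i : Fin r) :
    (∑ t, μ t • psi r σ c t) i.castSucc = Tsum μ ((σ.symm i : ℕ) + 1) := by
  unfold Tsum
  rw [Finset.sum_apply]
  apply Finset.sum_congr rfl
  intro t _
  rw [Pi.smul_apply, psi_apply_castSucc, smul_eq_mul]
  split_ifs with h1 h2 h2 <;> (first | ring1 | (exfalso; omega))

lemma z_last (σ : Equiv.Perm (Fin r)) (c : Fin (r + 1) → ℝ) (μ : Fin (r + 1) → ℝ) :
    (∑ t, μ t • psi r σ c t) (Fin.last r) = ∑ t, μ t * c t := by
  rw [Finset.sum_apply]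
  apply Finset.sum_congr rfl
  intro t _
  rw [Pi.smul_apply, psi_apply_last, smul_eq_mul]

/-- pinning of the tail sums by a representation -/
lemma Tsum_of_repr (σ : Equiv.Perm (Fin r)) (c : Fin (r + 1) → ℝ) (x : Fin r → ℝ)
    {μ : Fin (r + 1) → ℝ} {y : ℝ} (hμ1 : ∑ t, μ t = 1)
    (heq : ∑ t, μ t • psi r σ c t = Fin.snoc x y) (k : ℕ) :
    Tsum μ k = aF σ x k := by
  rcases Nat.eq_zero_or_pos k with h0 | hpos
  · subst h0
    rw [Tsum_zero, hμ1, aF]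
    simp
  · by_cases hk : k ≤ r
    · set j : Fin r := ⟨k - 1, by omega⟩ with hj
      have h1 : Tsum μ ((σ.symm (σ j) : ℕ) + 1) = x (σ j) := by
        rw [← z_castSucc σ c μ (σ j), heq, Fin.snoc_castSucc]
      rw [Equiv.symm_apply_apply] at h1
      have hjk : (j : ℕ) + 1 = k := by simp [hj]; omega
      rw [hjk] at h1
      rw [h1, aF, dif_neg (by omega), dif_pos hk]
    · rw [Tsum_of_gt μ (by omega), aF, dif_neg (by omega), dif_neg hk]

lemma mu_eq_wF (σ : Equiv.Perm (Fin r)) (c : Fin (r + 1) → ℝ) (x : Fin r → ℝ)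
    {μ : Fin (r + 1) → ℝ} {y : ℝ} (hμ1 : ∑ t, μ t = 1)
    (heq : ∑ t, μ t • psi r σ c t = Fin.snoc x y) :
    μ = wF σ x := by
  funext t
  have h1 : Tsum μ (t : ℕ) = μ t + Tsum μ ((t : ℕ) + 1) := by
    have := Tsum_succ μ (k := (t : ℕ)) (by have := t.isLt; omega)
    simpa using this
  have h2 := Tsum_of_repr σ c x hμ1 heq (t : ℕ)
  have h3 := Tsum_of_repr σ c x hμ1 heq ((t : ℕ) + 1)
  unfold wF
  rw [← h2, ← h3]
  linarith


lemma wF_nonneg (hr : 1 ≤ r) (σ : Equiv.Perm (Fin r)) (x : Fin r → ℝ)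
    (hx01 : ∀ i, x i ∈ Set.Icc (0 : ℝ) 1)
    (hmono : ∀ i j : Fin r, i ≤ j → x (σ j) ≤ x (σ i)) (t : Fin (r + 1)) :
    0 ≤ wF σ x t := by
  have ht : (t : ℕ) ≤ r := by have := t.isLt; omega
  unfold wF aF
  rcases Nat.eq_zero_or_pos (t : ℕ) with h0 | hpos
  · rw [dif_pos h0, dif_neg (by omega), dif_pos (by omega)]
    have := (hx01 (σ ⟨(t : ℕ) + 1 - 1, by omega⟩)).2
    linarith
  · rw [dif_neg (by omega), dif_pos ht, dif_neg (by omega)]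
    by_cases h : (t : ℕ) + 1 ≤ r
    · rw [dif_pos h]
      have := hmono ⟨(t : ℕ) - 1, by omega⟩ ⟨(t : ℕ) + 1 - 1, by omega⟩ (by rw [Fin.mk_le_mk]; omega)
      linarith
    · rw [dif_neg h]
      have := (hx01 (σ ⟨(t : ℕ) - 1, by omega⟩)).1
      linarith

lemma Tsum_wF (σ : Equiv.Perm (Fin r)) (x : Fin r → ℝ) :
    ∀ k : ℕ, Tsum (wF σ x) k = aF σ x k := by
  suffices h : ∀ m k : ℕ, r + 1 - k ≤ m → Tsum (wF σ x) k = aF σ x k by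
    intro k; exact h (r + 1) k (by omega)
  intro m
  induction m with
  | zero =>
    intro k hk
    rw [Tsum_of_gt _ (by omega), aF, dif_neg (by omega), dif_neg (by omega)]
  | succ m ih =>
    intro k hk
    by_cases hkr : k ≤ r
    · rw [Tsum_succ _ hkr, ih (k + 1) (by omega)]
      show wF σ x ⟨k, by omega⟩ + aF σ x (k + 1) = aF σ x k
      unfold wF
      ring
    · rw [Tsum_of_gt _ (by omega), aF, dif_neg (by omega), dif_neg hkr]

lemma sum_wF (σ : Equiv.Perm (Fin r)) (x : Fin r → ℝ) :
    ∑ t, wF σ x t = 1 := by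
  rw [← Tsum_zero, Tsum_wF]
  simp [aF]

lemma z_wF (σ : Equiv.Perm (Fin r)) (c : Fin (r + 1) → ℝ) (x : Fin r → ℝ) :
    ∑ t, wF σ x t • psi r σ c t = Fin.snoc x (∑ t, wF σ x t * c t) := by
  funext i
  induction i using Fin.lastCases with
  | last =>
    rw [z_last, Fin.snoc_last]
  | cast i =>
    rw [z_castSucc, Fin.snoc_castSucc, Tsum_wF]
    have h : ((σ.symm i : ℕ) + 1 ≤ r) ∨ ((σ.symm i : ℕ) + 1 = r + 1) := by
      have := (σ.symm i).isLt; omega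
    rw [aF, dif_neg (by omega)]
    rcases h with h | h
    · rw [dif_pos h]
      congr 1
      have : (⟨(σ.symm i : ℕ) + 1 - 1, by omega⟩ : Fin r) = σ.symm i := by
        apply Fin.ext; simp
      rw [this, Equiv.apply_symm_apply]
    · rw [dif_pos (by omega)]
      congr 1
      have : (⟨(σ.symm i : ℕ) + 1 - 1, by omega⟩ : Fin r) = σ.symm i := by
        apply Fin.ext; simp
      rw [this, Equiv.apply_symm_apply]

lemma psi_injective (σ : Equiv.Perm (Fin r)) (c : Fin (r + 1) → ℝ) :
    Function.Injective (psi r σ c) := by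
  have key : ∀ t t' : Fin (r + 1), (t : ℕ) < (t' : ℕ) → psi r σ c t ≠ psi r σ c t' := by
    intro t t' htt' h
    have hlt : (t : ℕ) < r := by have := t'.isLt; omega
    set j : Fin r := ⟨(t : ℕ), hlt⟩ with hj
    have := congrFun h ((σ j).castSucc)
    rw [psi_apply_castSucc, psi_apply_castSucc, Equiv.symm_apply_apply] at this
    rw [if_neg (by simp [hj]), if_pos (by simp [hj]; omega)] at this
    norm_num at this
  intro t t' h
  by_contra hne
  rcases Nat.lt_or_ge (t : ℕ) (t' : ℕ) with hlt | hge
  · exact key t t' hlt h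
  · have : (t' : ℕ) < (t : ℕ) := by
      rcases Nat.lt_or_ge (t' : ℕ) (t : ℕ) with h' | h'
      · exact h'
      · exact absurd (Fin.ext (by omega)) hne
    exact key t' t this h.symm


lemma master (hr : 1 ≤ r) (σ : Equiv.Perm (Fin r)) (c : Fin (r + 1) → ℝ)
    (x : Fin r → ℝ) (hx01 : ∀ i, x i ∈ Set.Icc (0 : ℝ) 1)
    (hmono : ∀ i j : Fin r, i ≤ j → x (σ j) ≤ x (σ i)) :
    ((Fin.snoc x (∑ t, wF σ x t * c t) : Fin (r + 1) → ℝ) ∈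
        convexHull ℝ (Set.range (psi r σ c))) ∧
      ∀ y : ℝ, (Fin.snoc x y : Fin (r + 1) → ℝ) ∈ convexHull ℝ (Set.range (psi r σ c)) →
        y = ∑ t, wF σ x t * c t := by
  constructor
  · rw [← z_wF σ c x]
    exact (convex_convexHull ℝ _).sum_mem (fun t _ => wF_nonneg hr σ x hx01 hmono t)
      (sum_wF σ x) (fun t _ => subset_convexHull ℝ _ ⟨t, rfl⟩)
  · intro y hy
    have hrange : Set.range (psi r σ c) = ↑(Finset.image (psi r σ c) Finset.univ) := by
      simp
    rw [hrange, Finset.convexHull_eq] at hy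
    obtain ⟨ν, hν0, hν1, hνc⟩ := hy
    rw [Finset.centerMass_eq_of_sum_1 _ _ hν1] at hνc
    rw [Finset.sum_image (fun a _ b _ h => psi_injective σ c h)] at hν1 hνc
    simp only [id] at hνc
    have hμw : (fun t => ν (psi r σ c t)) = wF σ x := mu_eq_wF σ c x hν1 hνc
    have hlast := congrFun hνc (Fin.last r)
    rw [z_last, Fin.snoc_last] at hlast
    rw [← hlast]
    exact congrArg (fun μ : Fin (r + 1) → ℝ => ∑ t, μ t * c t) hμw

lemma phiFull_image (σ : Equiv.Perm (Fin r)) (c : Fin (r + 1) → ℝ) (p : Fin (r + 1)) (δ : ℝ) :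
    phiFull r σ c p δ '' {t | t ≠ Fin.castSucc p} =
      Set.range (psi r σ (Function.update c p (c p + δ))) := by
  have hlast : phiFull r σ c p δ (Fin.last (r + 1)) =
      psi r σ (Function.update c p (c p + δ)) p := by
    rw [phiFull, Fin.snoc_last]
    unfold psi
    rw [Function.update_self, add_smul, ← add_assoc]
  have hcast : ∀ s : Fin (r + 1), s ≠ p →
      phiFull r σ c p δ s.castSucc = psi r σ (Function.update c p (c p + δ)) s := by
    intro s hs
    rw [phiFull, Fin.snoc_castSucc]
    unfold psi
    rw [Function.update_of_ne hs]
  ext v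
  constructor
  · rintro ⟨t, ht, rfl⟩
    induction t using Fin.lastCases with
    | last => exact ⟨p, hlast.symm⟩
    | cast s =>
      have hs : s ≠ p := fun h => ht (by rw [h])
      exact ⟨s, (hcast s hs).symm⟩
  · rintro ⟨s, rfl⟩
    by_cases hs : s = p
    · subst hs
      exact ⟨Fin.last (r + 1), (Fin.castSucc_lt_last s).ne', hlast⟩
    · exact ⟨s.castSucc, fun h => hs (Fin.castSucc_injective _ h), hcast s hs⟩

end Stmt12Aux

open Stmt12Aux in
theorem stmt12 (r : ℕ) (hr : 1 ≤ r) (σ : Equiv.Perm (Fin r)) (c : Fin (r + 1) → ℝ)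
    (p : Fin (r + 1)) (δ : ℝ) (hδ : 0 < δ)
    (x : Fin r → ℝ) (hx01 : ∀ i, x i ∈ Set.Icc (0 : ℝ) 1)
    (hmono : ∀ i j : Fin r, i ≤ j → x (σ j) ≤ x (σ i)) :
    ∃ y₁ y₂ : ℝ,
      ((Fin.snoc x y₁ : Fin (r + 1) → ℝ) ∈ convexHull ℝ (Set.range (psi r σ c)) ∧
        ∀ y : ℝ, (Fin.snoc x y : Fin (r + 1) → ℝ) ∈ convexHull ℝ (Set.range (psi r σ c)) →
          y = y₁) ∧
      ((Fin.snoc x y₂ : Fin (r + 1) → ℝ) ∈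
          convexHull ℝ (phiFull r σ c p δ '' {t | t ≠ Fin.castSucc p}) ∧
        ∀ y : ℝ, (Fin.snoc x y : Fin (r + 1) → ℝ) ∈
            convexHull ℝ (phiFull r σ c p δ '' {t | t ≠ Fin.castSucc p}) → y = y₂) ∧
      y₁ ≤ y₂ := by
  set c' := Function.update c p (c p + δ) with hc'
  obtain ⟨h1mem, h1uniq⟩ := master hr σ c x hx01 hmono
  obtain ⟨h2mem, h2uniq⟩ := master hr σ c' x hx01 hmono
  refine ⟨∑ t, wF σ x t * c t, ∑ t, wF σ x t * c' t, ⟨h1mem, h1uniq⟩, ?_, ?_⟩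
  · rw [phiFull_image σ c p δ]
    exact ⟨h2mem, h2uniq⟩
  · have hsum : ∀ t, wF σ x t * c' t = wF σ x t * c t + (if t = p then wF σ x t * δ else 0) := by
      intro t
      by_cases h : t = p
      · subst h
        rw [hc', Function.update_self, if_pos rfl]
        ring
      · rw [hc', Function.update_of_ne h, if_neg h]
        ring
    rw [Finset.sum_congr rfl (fun t _ => hsum t), Finset.sum_add_distrib,
      Finset.sum_ite_eq' Finset.univ]
    simp only [Finset.mem_univ, if_true]
    have h0 : 0 ≤ wF σ x p * δ :=
      mul_nonneg (wF_nonneg hr σ x hx01 hmono p) hδ.le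
    linarith
end

section
/- Let r ≥ 1 and let ε_1, ..., ε_r be elements of ℂ* × (0,∞)^r; write ε_j = (ε_j^{(1)}, ε_j^{(2)}, ..., ε_j^{(r+1)}) with ε_j^{(1)} a nonzero complex number and ε_j^{(i)} > 0 real for 2 ≤ i ≤ r+1. Assume |ε_j^{(1)}|² · ∏_{i=2}^{r+1} ε_j^{(i)} = 1 for each 1 ≤ j ≤ r. Then det(M) = (r+2)·det(M'), where M is the r×r real matrix with entries M_{ij} = log|ε_j^{(i)} / ε_j^{(r+1)}| and M' is the r×r real matrix with entries M'_{ij} = log|ε_j^{(i)}|, for 1 ≤ i, j ≤ r (here |·| denotes the complex modulus when i = 1). -/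
theorem stmt14 (r : ℕ) (hr : 1 ≤ r)
    (a : Fin r → ℂ) (ha : ∀ j, a j ≠ 0)
    (b : Fin r → Fin r → ℝ) (hb : ∀ j i, 0 < b j i)
    (hnorm : ∀ j, (‖a j‖) ^ 2 * ∏ i : Fin r, b j i = 1) :
    (Matrix.of fun i j : Fin r =>
        if (i : ℕ) = 0 then
          Real.log (‖a j‖ / b j ⟨r - 1, by omega⟩)
        else
          Real.log (b j ⟨(i : ℕ) - 1, by have := i.isLt; omega⟩ / b j ⟨r - 1, by omega⟩)).det
      = ((r : ℝ) + 2) *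
        (Matrix.of fun i j : Fin r =>
          if (i : ℕ) = 0 then Real.log (‖a j‖)
          else Real.log (b j ⟨(i : ℕ) - 1, by have := i.isLt; omega⟩)).det := by
  obtain ⟨m, rfl⟩ : ∃ m, r = m + 1 := ⟨r - 1, by omega⟩
  set M' : Matrix (Fin (m+1)) (Fin (m+1)) ℝ := Matrix.of fun i j =>
    if (i : ℕ) = 0 then Real.log (‖a j‖)
    else Real.log (b j ⟨(i : ℕ) - 1, by have := i.isLt; omega⟩) with hM'
  set w : Fin (m+1) → ℝ := fun k => if (k : ℕ) = 0 then 2 else 1 with hw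
  have habspos : ∀ j, (0:ℝ) < ‖a j‖ := fun j => norm_pos_iff.mpr (ha j)
  have key : ∀ j, 2 * Real.log (‖a j‖) + ∑ i, Real.log (b j i) = 0 := by
    intro j
    have hlog := congrArg Real.log (hnorm j)
    rw [Real.log_mul (pow_ne_zero 2 (habspos j).ne')
      (Finset.prod_pos (fun i _ => hb j i)).ne', Real.log_pow,
      Real.log_prod (fun i _ => (hb j i).ne'), Real.log_one] at hlog
    push_cast at hlog
    linarith
  have hsum : ∀ j, ∑ k : Fin (m+1), w k * M' k j
      = - Real.log (b j (Fin.last m)) := by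
    intro j
    rw [Fin.sum_univ_succ]
    have h0 : w 0 * M' 0 j = 2 * Real.log (‖a j‖) := by
      simp [hw, hM']
    have h1 : ∀ k : Fin m, w k.succ * M' k.succ j
        = Real.log (b j (Fin.castSucc k)) := by
      intro k
      have : (Fin.castSucc k) = (⟨((k.succ : Fin (m+1)) : ℕ) - 1, by
          have := (k.succ : Fin (m+1)).isLt; omega⟩ : Fin (m+1)) := by
        ext; simp
      rw [this]
      simp [hw, hM']
    rw [h0, Finset.sum_congr rfl (fun k _ => h1 k)]
    have := key j
    rw [Fin.sum_univ_castSucc] at this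
    linarith
  set A : Matrix (Fin (m+1)) (Fin (m+1)) ℝ :=
    1 + Matrix.replicateCol Unit (fun _ => (1:ℝ)) * Matrix.replicateRow Unit w with hA
  have hfac : (Matrix.of fun i j : Fin (m+1) =>
        if (i : ℕ) = 0 then
          Real.log (‖a j‖ / b j ⟨m + 1 - 1, by omega⟩)
        else
          Real.log (b j ⟨(i : ℕ) - 1, by have := i.isLt; omega⟩ / b j ⟨m + 1 - 1, by omega⟩))
      = A * M' := by
    ext i j
    have hlast : (⟨m + 1 - 1, by omega⟩ : Fin (m+1)) = Fin.last m := rfl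
    have hMij : (Matrix.of fun i j : Fin (m+1) =>
        if (i : ℕ) = 0 then
          Real.log (‖a j‖ / b j ⟨m + 1 - 1, by omega⟩)
        else
          Real.log (b j ⟨(i : ℕ) - 1, by have := i.isLt; omega⟩ / b j ⟨m + 1 - 1, by omega⟩)) i j
        = M' i j - Real.log (b j (Fin.last m)) := by
      by_cases hi : (i : ℕ) = 0
      · simp only [Matrix.of_apply, hM', if_pos hi, hlast]
        exact Real.log_div (habspos j).ne' (hb j _).ne'
      · simp only [Matrix.of_apply, hM', if_neg hi, hlast]
        exact Real.log_div (hb j _).ne' (hb j _).ne'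
    rw [hMij, Matrix.mul_apply]
    have hAk : ∀ k, A i k * M' k j
        = (if i = k then M' k j else 0) + w k * M' k j := by
      intro k
      simp [hA, Matrix.add_apply, Matrix.mul_apply, Matrix.one_apply, Matrix.replicateCol_apply,
        Matrix.replicateRow_apply, add_mul, ite_mul]
    rw [Finset.sum_congr rfl (fun k _ => hAk k), Finset.sum_add_distrib, hsum j,
      Finset.sum_ite_eq]
    simp [sub_eq_add_neg]
  rw [hfac, Matrix.det_mul, hA, Matrix.det_one_add_replicateCol_mul_replicateRow]
  congr 1
  have : ∑ k : Fin (m+1), w k = 2 + m := by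
    rw [Fin.sum_univ_succ]
    simp [hw]
  simp only [dotProduct, mul_one]
  rw [this]
  push_cast
  ring
end

section
/- Let k be a number field of degree n = r + 2 over ℚ with r ≥ 1, and let τ_1, ..., τ_{n-1} be pairwise distinct field embeddings of k into ℂ such that τ_1 is not real (its image is not contained in ℝ) and τ_2, ..., τ_{n-1} are all real (each has image contained in ℝ). Define J̃ : k → ℂ × ℝ^r by J̃(v) := (τ_1(v), τ_2(v), ..., τ_{n-1}(v)). Then for any elements v_1, ..., v_ℓ ∈ k with ℓ < n, the vector e_{r+2} := (0, 0, ..., 0, 1) ∈ ℂ × ℝ^r (zero in the complex coordinate and in the first r-1 real coordinates, 1 in the last real coordinate) does NOT lie in the real span ℝ·J̃(v_1) + ... + ℝ·J̃(v_ℓ) ⊆ ℂ × ℝ^r. -/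
theorem stmt15 (r : ℕ) (hr : 1 ≤ r) (k : Type*) [Field k] [NumberField k]
    (hdeg : Module.finrank ℚ k = r + 2)
    (τ : Fin (r + 1) → (k →+* ℂ))
    (hinj : Function.Injective τ)
    (h0 : ∃ x : k, (τ 0 x).im ≠ 0)
    (hreal : ∀ i : Fin (r + 1), i ≠ 0 → ∀ x : k, (τ i x).im = 0)
    (ℓ : ℕ) (hℓ : ℓ < r + 2) (v : Fin ℓ → k) :
    (((0 : ℂ), (Pi.single (⟨r - 1, by omega⟩ : Fin r) (1 : ℝ) : Fin r → ℝ)) :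
        ℂ × (Fin r → ℝ)) ∉
      Submodule.span ℝ (Set.range (fun i : Fin ℓ =>
        ((τ 0 (v i), fun j : Fin r => (τ j.succ (v i)).re) : ℂ × (Fin r → ℝ)))) := by
  intro hmem
  rw [Submodule.mem_span_range_iff_exists_fun] at hmem
  obtain ⟨c, hc⟩ := hmem
  set p : Fin r := ⟨r - 1, by omega⟩ with hp
  -- component equations
  have hc1 : ∑ i, (c i : ℂ) * τ 0 (v i) = 0 := by
    have := congrArg Prod.fst hc
    simpa [Prod.fst_sum, Complex.real_smul] using this
  have hc2 : ∀ j : Fin r, ∑ i, c i * (τ j.succ (v i)).re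
      = (Pi.single p (1 : ℝ) : Fin r → ℝ) j := by
    intro j
    have := congrFun (congrArg Prod.snd hc) j
    simpa [Prod.snd_sum, Finset.sum_apply] using this
  -- find nonzero a with trace (a * v i) = 0 for all i
  set L : k →ₗ[ℚ] (Fin ℓ → ℚ) := LinearMap.pi
    (fun i => (Algebra.trace ℚ k) ∘ₗ (LinearMap.mulRight ℚ (v i))) with hL
  have hnotinj : ¬ Function.Injective L := by
    intro h
    have := LinearMap.finrank_le_finrank_of_injective h
    rw [hdeg, Module.finrank_pi] at this
    simp at this
    omega
  rw [← LinearMap.ker_eq_bot] at hnotinj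
  obtain ⟨a, haker, ha0⟩ := Submodule.exists_mem_ne_zero_of_ne_bot hnotinj
  have htr : ∀ i, Algebra.trace ℚ k (a * v i) = 0 := by
    intro i
    have := congrFun (LinearMap.mem_ker.mp haker) i
    simpa [hL, LinearMap.pi_apply] using this
  classical
  set conjτ : k →+* ℂ := (starRingEnd ℂ).comp (τ 0) with hconjτ
  set f : Fin (r + 2) → (k →ₐ[ℚ] ℂ) :=
    Fin.snoc (fun i => (τ i).toRatAlgHom) conjτ.toRatAlgHom with hf
  have htoRat : Function.Injective (RingHom.toRatAlgHom (R := k) (S := ℂ)) := by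
    intro g₁ g₂ h
    have := congrArg AlgHom.toRingHom h
    simpa [RingHom.toRatAlgHom_toRingHom] using this
  have hconjne : ∀ i : Fin (r + 1), conjτ ≠ τ i := by
    intro i hconj
    obtain ⟨x, hx⟩ := h0
    have him := congrArg (fun g : k →+* ℂ => (g x).im) hconj
    simp only [hconjτ, RingHom.coe_comp, Function.comp_apply, Complex.conj_im] at him
    by_cases hi : i = 0
    · rw [hi] at him; exact hx (by linarith)
    · rw [hreal i hi x] at him; exact hx (by linarith)
  have hfinj : Function.Injective f := by
    intro x y hxy
    induction x using Fin.lastCases with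
    | last =>
      induction y using Fin.lastCases with
      | last => rfl
      | cast j =>
        exfalso
        apply hconjne j
        apply htoRat
        simpa [hf, Fin.snoc_last, Fin.snoc_castSucc] using hxy
    | cast i =>
      induction y using Fin.lastCases with
      | last =>
        exfalso
        apply hconjne i
        apply htoRat
        simpa [hf, Fin.snoc_last, Fin.snoc_castSucc] using hxy.symm
      | cast j =>
        have : τ i = τ j := htoRat (by simpa [hf, Fin.snoc_castSucc] using hxy)
        rw [hinj this]
  have hbij : Function.Bijective f := by
    rw [Fintype.bijective_iff_injective_and_card]
    refine ⟨hfinj, ?_⟩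
    rw [Fintype.card_fin, AlgHom.card, hdeg]
  -- trace identity
  have hsum : ∀ i, (∑ t : Fin (r + 1), τ t a * τ t (v i))
      + (starRingEnd ℂ) (τ 0 a) * (starRingEnd ℂ) (τ 0 (v i)) = 0 := by
    intro i
    have h1 : algebraMap ℚ ℂ (Algebra.trace ℚ k (a * v i))
        = ∑ σ : k →ₐ[ℚ] ℂ, σ (a * v i) := trace_eq_sum_embeddings ℂ
    rw [htr i, map_zero] at h1
    have h2 : ∑ σ : k →ₐ[ℚ] ℂ, σ (a * v i) = ∑ j : Fin (r + 2), f j (a * v i) :=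
      (Fintype.sum_bijective f hbij _ _ (fun j => rfl)).symm
    rw [h2, Fin.sum_univ_castSucc] at h1
    have h3 : ∀ t : Fin (r + 1), f (Fin.castSucc t) (a * v i) = τ t a * τ t (v i) := by
      intro t
      simp [hf, Fin.snoc_castSucc, RingHom.toRatAlgHom, map_mul]
    have h4 : f (Fin.last (r + 1)) (a * v i)
        = (starRingEnd ℂ) (τ 0 a) * (starRingEnd ℂ) (τ 0 (v i)) := by
      simp [hf, Fin.snoc_last, RingHom.toRatAlgHom, hconjτ, map_mul]
    calc (∑ t : Fin (r + 1), τ t a * τ t (v i))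
        + (starRingEnd ℂ) (τ 0 a) * (starRingEnd ℂ) (τ 0 (v i))
        = (∑ t : Fin (r + 1), f (Fin.castSucc t) (a * v i)) + f (Fin.last (r + 1)) (a * v i) := by
          rw [h4, Finset.sum_congr rfl (fun t _ => (h3 t).symm)]
      _ = 0 := h1.symm
  -- weighted sums over embeddings
  set S : Fin (r + 1) → ℂ := fun t => ∑ i, (c i : ℂ) * τ t (v i) with hS
  have hS0 : S 0 = 0 := hc1
  have hSsucc : ∀ j : Fin r, S j.succ = (((Pi.single p (1 : ℝ) : Fin r → ℝ) j : ℝ) : ℂ) := by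
    intro j
    have : ∀ i, (c i : ℂ) * τ j.succ (v i) = ((c i * (τ j.succ (v i)).re : ℝ) : ℂ) := by
      intro i
      have him : (τ j.succ (v i)).im = 0 := hreal j.succ (Fin.succ_ne_zero j) (v i)
      apply Complex.ext <;> simp [Complex.mul_re, Complex.mul_im, him]
    show ∑ i : Fin ℓ, (c i : ℂ) * τ j.succ (v i) = _
    rw [Finset.sum_congr rfl (fun i _ => this i), ← hc2 j]
    push_cast
    rfl
  -- main computation
  have hmain : (∑ t : Fin (r + 1), τ t a * S t)
      + (starRingEnd ℂ) (τ 0 a) * (starRingEnd ℂ) (S 0) = 0 := by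
    have := Finset.sum_congr rfl (fun i (_ : i ∈ Finset.univ) =>
      congrArg (fun z => (c i : ℂ) * z) (hsum i))
    simp only [mul_zero, Finset.sum_const_zero] at this
    rw [← this]
    rw [hS]
    simp only [map_sum, map_mul, Finset.mul_sum, mul_add]
    rw [Finset.sum_add_distrib, Finset.sum_comm]
    congr 1
    · exact Finset.sum_congr rfl (fun t _ => Finset.sum_congr rfl (fun i _ => by ring))
    · exact Finset.sum_congr rfl (fun i _ => by rw [Complex.conj_ofReal]; ring)
  rw [hS0, map_zero, mul_zero, add_zero] at hmain
  rw [Fin.sum_univ_succ, hS0, mul_zero, zero_add] at hmain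
  have hfinal : τ p.succ a = 0 := by
    rw [Finset.sum_congr rfl (fun j _ => by rw [hSsucc j])] at hmain
    have : ∀ j : Fin r, τ j.succ a * (((Pi.single p (1:ℝ) : Fin r → ℝ) j : ℝ) : ℂ)
        = if j = p then τ j.succ a else 0 := by
      intro j
      by_cases h : j = p <;> simp [h, Pi.single_apply]
    rw [Finset.sum_congr rfl (fun j _ => this j), Finset.sum_ite_eq' Finset.univ p] at hmain
    simpa using hmain
  exact ha0 ((map_eq_zero (τ p.succ)).mp hfinal)
end

section
/- Let k be a number field with exactly one pair of complex-conjugate (non-real) embeddings into ℂ and at least one real embedding. Let ε be a unit of the ring of integers of k such that σ(ε) > 0 for every real embedding σ : k → ℝ, and assume that |τ(ε)| takes the same value for all embeddings τ : k → ℂ. Then ε = 1. -/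
theorem stmt16 (k : Type*) [Field k] [NumberField k]
    (hcomplex : Nat.card {τ : k →+* ℂ // ∃ x : k, (τ x).im ≠ 0} = 2)
    (hrealemb : Nonempty (k →+* ℝ))
    (ε : (NumberField.RingOfIntegers k)ˣ)
    (hpos : ∀ σ : k →+* ℝ, 0 < σ (algebraMap (NumberField.RingOfIntegers k) k ε))
    (habs : ∃ c : ℝ, ∀ τ : k →+* ℂ,
      ‖τ (algebraMap (NumberField.RingOfIntegers k) k ε)‖ = c) :
    ε = 1 := by
  obtain ⟨c, hc⟩ := habs
  set x : k := algebraMap (NumberField.RingOfIntegers k) k ε with hxdef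
  -- the norm of a unit has absolute value 1
  have hnorm : |(Algebra.norm ℚ x : ℚ)| = 1 := by
    have hunit := NumberField.isUnit_iff_norm.mp ε.isUnit
    rwa [RingOfIntegers.coe_norm] at hunit
  -- product formula over all embeddings
  have hprod : ∏ φ : k →+* ℂ, ‖φ x‖ = |((Algebra.norm ℚ x : ℚ) : ℝ)| := by
    have h := congr_arg (‖·‖ : ℂ → ℝ) (Algebra.norm_eq_prod_embeddings ℚ ℂ (x := x))
    rw [norm_prod, eq_ratCast, ← Complex.ofReal_ratCast, Complex.norm_real, Real.norm_eq_abs] at h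
    rw [h]
    exact Fintype.prod_equiv (RingHom.equivRatAlgHom k ℂ) (fun φ => ‖φ x‖)
      (fun f => ‖f x‖) fun _ => rfl
  have hcard : Fintype.card (k →+* ℂ) ≠ 0 := by
    have := Fintype.card_pos_iff.mpr (inferInstance : Nonempty (k →+* ℂ))
    omega
  have hcN : c ^ Fintype.card (k →+* ℂ) = 1 := by
    have h2 : ∏ φ : k →+* ℂ, ‖φ x‖ = c ^ Fintype.card (k →+* ℂ) := by
      rw [Finset.prod_congr rfl fun φ _ => hc φ, Finset.prod_const, Finset.card_univ]
    rw [← h2, hprod, ← Rat.cast_abs, hnorm, Rat.cast_one]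
  have hc0 : 0 ≤ c := by rw [← hc (Classical.arbitrary _)]; positivity
  have hc1 : c = 1 := by
    have := pow_left_strictMonoOn₀ (M₀ := ℝ) hcard
    exact this.injOn hc0 (by norm_num : (0:ℝ) ≤ 1) (by rw [hcN, one_pow])
  -- Kronecker's theorem: x is a root of unity
  have hxi : IsIntegral ℤ x := NumberField.RingOfIntegers.isIntegral_coe (ε : NumberField.RingOfIntegers k)
  have hone : ∀ φ : k →+* ℂ, ‖φ x‖ = 1 := fun φ => by
    rw [hc φ, hc1]
  obtain ⟨n, hn, hxn⟩ := NumberField.Embeddings.pow_eq_one_of_norm_eq_one k ℂ hxi hone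
  obtain ⟨σ⟩ := hrealemb
  have hσ : σ x ^ n = 1 := by rw [← map_pow, hxn, map_one]
  have hσ1 : σ x = 1 := by
    have := pow_left_strictMonoOn₀ (M₀ := ℝ) hn.ne'
    exact this.injOn (hpos σ).le (by norm_num : (0:ℝ) ≤ 1) (by rw [hσ, one_pow])
  have hx1 : x = 1 := σ.injective (by rw [hσ1, map_one])
  have : (ε : NumberField.RingOfIntegers k) = 1 :=
    NumberField.RingOfIntegers.coe_injective (by rw [← hxdef, hx1, map_one])
  exact Units.ext this
end
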